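/- Under the setting above (with ε0 < 1/2), for any α̂ ∈ R^k and any v ∈ range(U), it holds that ‖Û α̂ − v‖₂² ≤ ‖α̂ − Û^T v‖₂² + ‖v‖₂² · ε1². -/

import Mathlib

/-- Euclidean norm of a vector in `ℝ^n`. -/
noncomputable def vnorm {n : ℕ} (v : Fin n → ℝ) : ℝ := Real.sqrt (∑ i, v i ^ 2)

/-- The `j`-th largest singular value (1-indexed) of a real `m × n` matrix, via the
Courant–Fischer max-min characterization.  In particular `sval A 1` is the spectral
norm `‖A‖₂` and `sval A k` is `σ_k(A)`. -/
noncomputable def sval {m n : ℕ} (A : Matrix (Fin m) (Fin n) ℝ) (j : ℕ) : ℝ :=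
  sSup {c : ℝ | 0 ≤ c ∧ ∃ W : Submodule ℝ (Fin n → ℝ), Module.finrank ℝ W = j ∧
    ∀ v ∈ W, c * vnorm v ≤ vnorm (A.mulVec v)}

/-- `U` is an `m × k` matrix of orthonormal columns spanning a top-`k` left singular
subspace of `A`: its columns are orthonormal eigenvectors of `A Aᵀ` whose eigenvalues
are (at least) `σ_k(A)²`, i.e. belong to the `k` largest. -/
def IsTopSingular {m n k : ℕ} (A : Matrix (Fin m) (Fin n) ℝ)
    (U : Matrix (Fin m) (Fin k) ℝ) : Prop :=
  U.transpose * U = 1 ∧ ∃ D : Fin k → ℝ,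
    A * A.transpose * U = U * Matrix.diagonal D ∧ ∀ j, sval A k ^ 2 ≤ D j

namespace Stmt9Aux

open Matrix

variable {m n k : ℕ}

noncomputable def toE {m : ℕ} (v : Fin m → ℝ) : EuclideanSpace ℝ (Fin m) := WithLp.toLp 2 v

variable {m n k : ℕ}

lemma vnorm_eq (v : Fin m → ℝ) : vnorm v = ‖toE v‖ := by
  rw [EuclideanSpace.norm_eq, vnorm]
  congr 1; apply Finset.sum_congr rfl; intro i _
  rw [Real.norm_eq_abs, sq_abs]; rfl

lemma dot_eq_inner (v w : Fin m → ℝ) : v ⬝ᵥ w = inner ℝ (toE v) (toE w) := by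
  rw [PiLp.inner_apply, dotProduct]
  apply Finset.sum_congr rfl; intro i _
  rw [RCLike.inner_apply, conj_trivial, mul_comm]; rfl

lemma vnorm_nonneg (v : Fin m → ℝ) : 0 ≤ vnorm v := by rw [vnorm_eq]; positivity

lemma vnorm_sq (v : Fin m → ℝ) : vnorm v ^ 2 = v ⬝ᵥ v := by
  rw [vnorm_eq, dot_eq_inner, real_inner_self_eq_norm_sq]

lemma vnorm_zero : vnorm (0 : Fin m → ℝ) = 0 := by
  rw [vnorm_eq]; exact norm_zero

lemma vnorm_eq_zero {v : Fin m → ℝ} (h : vnorm v = 0) : v = 0 := by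
  rw [vnorm_eq] at h; exact congrArg WithLp.ofLp ((norm_eq_zero (E := EuclideanSpace ℝ (Fin m))).mp h)

lemma vnorm_smul (t : ℝ) (v : Fin m → ℝ) : vnorm (t • v) = |t| * vnorm v := by
  rw [vnorm_eq, vnorm_eq, show toE (t • v) = t • toE v from rfl, norm_smul, Real.norm_eq_abs]

lemma vnorm_add_le (v w : Fin m → ℝ) : vnorm (v + w) ≤ vnorm v + vnorm w := by
  rw [vnorm_eq, vnorm_eq, vnorm_eq]; exact norm_add_le _ _

lemma vnorm_sub_le (v w : Fin m → ℝ) : vnorm (v - w) ≤ vnorm v + vnorm w := by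
  rw [vnorm_eq, vnorm_eq, vnorm_eq]; exact norm_sub_le _ _

lemma abs_dot_le (v w : Fin m → ℝ) : |v ⬝ᵥ w| ≤ vnorm v * vnorm w := by
  rw [dot_eq_inner, vnorm_eq, vnorm_eq]; exact abs_real_inner_le_norm _ _

lemma dot_le (v w : Fin m → ℝ) : v ⬝ᵥ w ≤ vnorm v * vnorm w :=
  (le_abs_self _).trans (abs_dot_le v w)


lemma vnorm_pos {v : Fin m → ℝ} (h : v ≠ 0) : 0 < vnorm v :=
  lt_of_le_of_ne (vnorm_nonneg v) (fun h0 => h (vnorm_eq_zero h0.symm))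

def svalSet {m n : ℕ} (A : Matrix (Fin m) (Fin n) ℝ) (j : ℕ) : Set ℝ :=
  {c : ℝ | 0 ≤ c ∧ ∃ W : Submodule ℝ (Fin n → ℝ), Module.finrank ℝ W = j ∧
    ∀ v ∈ W, c * vnorm v ≤ vnorm (A.mulVec v)}

lemma sval_eq_sSup (A : Matrix (Fin m) (Fin n) ℝ) (j : ℕ) : sval A j = sSup (svalSet A j) := rfl

noncomputable def mulVecL (A : Matrix (Fin m) (Fin n) ℝ) :
    EuclideanSpace ℝ (Fin n) →ₗ[ℝ] EuclideanSpace ℝ (Fin m) where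
  toFun v := toE (A.mulVec v)
  map_add' x y := by
    show toE (A.mulVec (x.ofLp + y.ofLp)) = toE (A.mulVec x.ofLp + A.mulVec y.ofLp)
    rw [Matrix.mulVec_add]
  map_smul' t x := by
    show toE (A.mulVec (t • x.ofLp)) = toE (t • A.mulVec x.ofLp)
    rw [Matrix.mulVec_smul]

noncomputable def mulVecCLM (A : Matrix (Fin m) (Fin n) ℝ) :
    EuclideanSpace ℝ (Fin n) →L[ℝ] EuclideanSpace ℝ (Fin m) :=
  LinearMap.toContinuousLinearMap (mulVecL A)

lemma mulVec_le_op (A : Matrix (Fin m) (Fin n) ℝ) (v : Fin n → ℝ) :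
    vnorm (A.mulVec v) ≤ ‖mulVecCLM A‖ * vnorm v := by
  rw [vnorm_eq, vnorm_eq (m := n)]
  exact (mulVecCLM A).le_opNorm (toE v)

lemma sval_bddAbove (A : Matrix (Fin m) (Fin n) ℝ) {j : ℕ} (hj : 0 < j) :
    BddAbove (svalSet A j) := by
  refine ⟨‖mulVecCLM A‖, fun c hc => ?_⟩
  obtain ⟨hc0, W, hWr, hWp⟩ := hc
  have hWb : W ≠ ⊥ := by
    intro h
    rw [h, finrank_bot] at hWr
    omega
  obtain ⟨v, hvW, hv0⟩ := Submodule.exists_mem_ne_zero_of_ne_bot hWb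
  have h1 := hWp v hvW
  have h2 := mulVec_le_op A v
  have h3 := vnorm_pos hv0
  nlinarith [h1.trans h2]

lemma sval_nonneg (A : Matrix (Fin m) (Fin n) ℝ) (j : ℕ) : 0 ≤ sval A j :=
  Real.sSup_nonneg (fun _ hx => hx.1)

lemma le_sval {A : Matrix (Fin m) (Fin n) ℝ} {j : ℕ} (hj : 0 < j) {c : ℝ}
    (h : c ∈ svalSet A j) : c ≤ sval A j :=
  le_csSup (sval_bddAbove A hj) h

lemma sval_le {A : Matrix (Fin m) (Fin n) ℝ} {j : ℕ} {b : ℝ} (hb : 0 ≤ b)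
    (h : ∀ c ∈ svalSet A j, c ≤ b) : sval A j ≤ b :=
  Real.sSup_le h hb

lemma sval_one_mulVec_le (A : Matrix (Fin m) (Fin n) ℝ) (v : Fin n → ℝ) :
    vnorm (A.mulVec v) ≤ sval A 1 * vnorm v := by
  by_cases hv : v = 0
  · subst hv
    rw [Matrix.mulVec_zero, vnorm_zero]
    simp [vnorm_zero]
  · have hv' : 0 < vnorm v := vnorm_pos hv
    have hmem : vnorm (A.mulVec v) / vnorm v ∈ svalSet A 1 := by
      refine ⟨div_nonneg (vnorm_nonneg _) (vnorm_nonneg _), Submodule.span ℝ {v},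
        finrank_span_singleton hv, fun x hx => ?_⟩
      obtain ⟨t, rfl⟩ := Submodule.mem_span_singleton.mp hx
      rw [Matrix.mulVec_smul, vnorm_smul, vnorm_smul]
      have heq : vnorm (A *ᵥ v) / vnorm v * (|t| * vnorm v) = |t| * vnorm (A *ᵥ v) := by
        field_simp
      rw [heq]
    have := le_sval one_pos hmem
    calc vnorm (A.mulVec v) = vnorm (A.mulVec v) / vnorm v * vnorm v := by
          field_simp
      _ ≤ sval A 1 * vnorm v := by
          exact mul_le_mul_of_nonneg_right this (vnorm_nonneg v)


lemma mulVec_dot (A : Matrix (Fin m) (Fin n) ℝ) (x : Fin n → ℝ) (y : Fin m → ℝ) :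
    (A *ᵥ x) ⬝ᵥ y = x ⬝ᵥ (Aᵀ *ᵥ y) := by
  rw [dotProduct_comm, dotProduct_mulVec, mulVec_transpose, dotProduct_comm]

lemma sval_one_transpose_le (A : Matrix (Fin m) (Fin n) ℝ) (u : Fin m → ℝ) :
    vnorm (Aᵀ.mulVec u) ≤ sval A 1 * vnorm u := by
  set x := Aᵀ *ᵥ u with hx
  have h1 : vnorm x ^ 2 = (A *ᵥ x) ⬝ᵥ u := by rw [vnorm_sq, hx]; rw [← mulVec_dot]
  have h2 : (A *ᵥ x) ⬝ᵥ u ≤ sval A 1 * vnorm x * vnorm u :=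
    (dot_le _ _).trans (mul_le_mul_of_nonneg_right (sval_one_mulVec_le A x) (vnorm_nonneg u))
  by_cases h0 : vnorm x = 0
  · rw [h0]
    exact mul_nonneg (sval_nonneg A 1) (vnorm_nonneg u)
  · have hp : 0 < vnorm x := lt_of_le_of_ne (vnorm_nonneg x) (Ne.symm h0)
    nlinarith [h1, h2]

lemma sval_weyl (A B : Matrix (Fin m) (Fin n) ℝ) {j : ℕ} (hj : 0 < j) :
    sval A j ≤ sval B j + sval (A - B) 1 := by
  refine sval_le (add_nonneg (sval_nonneg _ _) (sval_nonneg _ _)) (fun c hc => ?_)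
  obtain ⟨hc0, W, hWr, hWp⟩ := hc
  set e := sval (A - B) 1 with he
  by_cases hce : c ≤ e
  · have := sval_nonneg B j
    linarith
  · push_neg at hce
    have hmem : c - e ∈ svalSet B j := by
      refine ⟨by linarith [sval_nonneg (A - B) 1], W, hWr, fun v hv => ?_⟩
      have h1 : vnorm (A *ᵥ v) ≤ vnorm (B *ᵥ v) + vnorm ((A - B) *ᵥ v) := by
        have : A *ᵥ v = B *ᵥ v + (A - B) *ᵥ v := by rw [Matrix.sub_mulVec]; ring_nf
        rw [this]; exact vnorm_add_le _ _
      have h2 := sval_one_mulVec_le (A - B) v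
      have h3 := hWp v hv
      have h4 := vnorm_nonneg v
      nlinarith
    linarith [le_sval hj hmem]

lemma sval_eq_zero_of_rank (X : Matrix (Fin m) (Fin n) ℝ) (hk : X.rank = k) :
    sval X (k + 1) = 0 := by
  refine le_antisymm (sval_le le_rfl (fun c hc => ?_)) (sval_nonneg _ _)
  obtain ⟨hc0, W, hWr, hWp⟩ := hc
  by_contra hcpos
  push_neg at hcpos
  -- kernel of mulVecLin
  set K := LinearMap.ker X.mulVecLin with hK
  have hrk : Module.finrank ℝ (LinearMap.range X.mulVecLin) + Module.finrank ℝ K = n := by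
    rw [LinearMap.finrank_range_add_finrank_ker]
    simp [Module.finrank_pi]
  have hKr : Module.finrank ℝ K = n - k := by
    have : Module.finrank ℝ (LinearMap.range X.mulVecLin) = k := hk
    omega
  have hkn : k ≤ n := by
    have := X.rank_le_width
    omega
  -- W ⊓ K nontrivial
  have hsum := Submodule.finrank_sup_add_finrank_inf_eq W K
  have hle : Module.finrank ℝ ↥(W ⊔ K) ≤ n := by
    have := Submodule.finrank_le (W ⊔ K)
    simpa [Module.finrank_pi] using this
  have hinf : 0 < Module.finrank ℝ ↥(W ⊓ K) := by omega
  have hne : W ⊓ K ≠ ⊥ := by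
    intro h
    rw [h, finrank_bot] at hinf
    omega
  obtain ⟨v, hvm, hv0⟩ := Submodule.exists_mem_ne_zero_of_ne_bot hne
  have hvW : v ∈ W := hvm.1
  have hvK : X *ᵥ v = 0 := hvm.2
  have := hWp v hvW
  rw [hvK, vnorm_zero] at this
  nlinarith [vnorm_pos hv0]


lemma vnorm_le_sqrt_mul_sup (v : Fin n → ℝ) : vnorm v ≤ Real.sqrt n * ‖v‖ := by
  rw [vnorm]
  have h1 : ∑ i, v i ^ 2 ≤ (n : ℝ) * ‖v‖ ^ 2 := by
    calc ∑ i, v i ^ 2 ≤ ∑ _i : Fin n, ‖v‖ ^ 2 := by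
          apply Finset.sum_le_sum
          intro i _
          have := norm_le_pi_norm v i
          have h0 : (0:ℝ) ≤ ‖v i‖ := norm_nonneg _
          have hsq : v i ^ 2 = ‖v i‖ ^ 2 := by rw [Real.norm_eq_abs, sq_abs]
          nlinarith
      _ = (n : ℝ) * ‖v‖ ^ 2 := by simp [Finset.sum_const, Finset.card_univ]
  calc Real.sqrt (∑ i, v i ^ 2) ≤ Real.sqrt ((n : ℝ) * ‖v‖ ^ 2) := Real.sqrt_le_sqrt h1
    _ = Real.sqrt n * ‖v‖ := by
        rw [Real.sqrt_mul (by positivity), Real.sqrt_sq (norm_nonneg _)]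

lemma sval_rank_pos (X : Matrix (Fin m) (Fin n) ℝ) (hrk : X.rank = k) (hk0 : 0 < k) :
    0 < sval X k := by
  classical
  set W0 : Submodule ℝ (Fin n → ℝ) := LinearMap.range (Xᵀ).mulVecLin with hW0
  have hfr : Module.finrank ℝ W0 = k := by
    have : Xᵀ.rank = k := by rw [X.rank_transpose]; exact hrk
    exact this
  -- injectivity of X on W0
  have hinj : ∀ v ∈ W0, X *ᵥ v = 0 → v = 0 := by
    intro v hv h0
    obtain ⟨z, hz⟩ := hv
    rw [Matrix.mulVecLin_apply] at hz
    have hv2 : vnorm v ^ 2 = 0 := by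
      rw [vnorm_sq]
      calc v ⬝ᵥ v = (Xᵀ *ᵥ z) ⬝ᵥ v := by rw [hz]
        _ = z ⬝ᵥ (Xᵀᵀ *ᵥ v) := mulVec_dot _ _ _
        _ = 0 := by rw [transpose_transpose, h0, dotProduct_zero]
    exact vnorm_eq_zero (pow_eq_zero_iff two_ne_zero |>.mp hv2)
  -- continuous linear map from W0
  let f : W0 →ₗ[ℝ] EuclideanSpace ℝ (Fin m) :=
    { toFun := fun v => toE (X *ᵥ (v : Fin n → ℝ))
      map_add' := fun x y => by
        show toE (X *ᵥ ((x : Fin n → ℝ) + y)) = toE (X *ᵥ x + X *ᵥ y)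
        rw [Matrix.mulVec_add]
      map_smul' := fun t x => by
        show toE (X *ᵥ (t • (x : Fin n → ℝ))) = toE (t • (X *ᵥ x))
        rw [Matrix.mulVec_smul] }
  have hker : LinearMap.ker f = ⊥ := by
    rw [LinearMap.ker_eq_bot]
    intro x y hxy
    have hx : X *ᵥ (x : Fin n → ℝ) = X *ᵥ (y : Fin n → ℝ) := congrArg WithLp.ofLp hxy
    have : ((x : Fin n → ℝ) - y) ∈ W0 := W0.sub_mem x.2 y.2
    have h0 : X *ᵥ ((x : Fin n → ℝ) - y) = 0 := by
      rw [Matrix.mulVec_sub, hx, sub_self]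
    have := hinj _ this h0
    exact Subtype.ext (by rwa [sub_eq_zero] at this)
  obtain ⟨K, hKpos, hKanti⟩ := f.exists_antilipschitzWith hker
  -- the candidate constant
  set C : ℝ := (K : ℝ) * (Real.sqrt n + 1) + 1 with hC
  have hCpos : 0 < C := by positivity
  have hmem : C⁻¹ ∈ svalSet X k := by
    refine ⟨by positivity, W0, hfr, fun v hv => ?_⟩
    have hnorm : ‖(⟨v, hv⟩ : W0)‖ ≤ (K : ℝ) * vnorm (X *ᵥ v) := by
      have h := hKanti.le_mul_dist (⟨v, hv⟩ : W0) 0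
      rw [map_zero] at h
      rw [dist_zero_right, dist_zero_right] at h
      calc ‖(⟨v, hv⟩ : W0)‖ ≤ (K : ℝ) * ‖f ⟨v, hv⟩‖ := h
        _ = (K : ℝ) * vnorm (X *ᵥ v) := by
            have hfe : f ⟨v, hv⟩ = toE (X *ᵥ v) := rfl
            rw [hfe, ← vnorm_eq]
    have h2 : vnorm v ≤ Real.sqrt n * ‖(⟨v, hv⟩ : W0)‖ := by
      have : ‖(⟨v, hv⟩ : W0)‖ = ‖v‖ := rfl
      rw [this]
      exact vnorm_le_sqrt_mul_sup v
    have h3 : vnorm v ≤ Real.sqrt n * ((K : ℝ) * vnorm (X *ᵥ v)) :=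
      h2.trans (mul_le_mul_of_nonneg_left hnorm (Real.sqrt_nonneg _))
    rw [inv_mul_le_iff₀ hCpos]
    have h4 : Real.sqrt n * (K : ℝ) ≤ C := by
      have hs := Real.sqrt_nonneg (n : ℝ)
      have hK0 : (0:ℝ) ≤ K := K.2
      nlinarith
    have h5 := vnorm_nonneg (X *ᵥ v)
    nlinarith
  have := le_sval hk0 hmem
  have : (0:ℝ) < C⁻¹ := by positivity
  linarith [le_sval hk0 hmem]


lemma eq_of_sq_eq_sq {a b : ℝ} (ha : 0 ≤ a) (hb : 0 ≤ b) (h : a ^ 2 = b ^ 2) : a = b := by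
  nlinarith

lemma le_of_sq_le_sq {a b : ℝ} (hb : 0 ≤ b) (h : a ^ 2 ≤ b ^ 2) (ha : 0 ≤ a) : a ≤ b := by
  nlinarith

lemma diag_mulVec (v w : Fin k → ℝ) : Matrix.diagonal v *ᵥ w = fun j => v j * w j :=
  funext (mulVec_diagonal v w)

section Ortho

variable {Q : Matrix (Fin m) (Fin k) ℝ} (hQ : Qᵀ * Q = 1)

include hQ

lemma ortho_dot (a b : Fin k → ℝ) : (Q *ᵥ a) ⬝ᵥ (Q *ᵥ b) = a ⬝ᵥ b := by
  rw [mulVec_dot, mulVec_mulVec, hQ, one_mulVec]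

lemma ortho_vnorm (a : Fin k → ℝ) : vnorm (Q *ᵥ a) = vnorm a :=
  eq_of_sq_eq_sq (vnorm_nonneg _) (vnorm_nonneg _)
    (by rw [vnorm_sq, vnorm_sq, ortho_dot hQ])

lemma ortho_tQ (a : Fin k → ℝ) : Qᵀ *ᵥ (Q *ᵥ a) = a := by
  rw [mulVec_mulVec, hQ, one_mulVec]

/-- the residual of the projection is orthogonal to the range -/
lemma proj_perp (x : Fin m → ℝ) : Qᵀ *ᵥ (x - Q *ᵥ (Qᵀ *ᵥ x)) = 0 := by
  rw [Matrix.mulVec_sub, ortho_tQ hQ, sub_self]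

lemma dot_mulVec_left (a : Fin k → ℝ) (y : Fin m → ℝ) :
    (Q *ᵥ a) ⬝ᵥ y = a ⬝ᵥ (Qᵀ *ᵥ y) := mulVec_dot Q a y

/-- Pythagoras: decompose x = proj + residual -/
lemma proj_pyth (x : Fin m → ℝ) :
    vnorm x ^ 2 = vnorm (x - Q *ᵥ (Qᵀ *ᵥ x)) ^ 2 + vnorm (Qᵀ *ᵥ x) ^ 2 := by
  set p := Q *ᵥ (Qᵀ *ᵥ x) with hp
  have hqp : (x - p) ⬝ᵥ p = 0 := by
    rw [dotProduct_comm, hp, dot_mulVec_left hQ, proj_perp hQ, dotProduct_zero]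
  have hx : x = (x - p) + p := by ring
  have hpp : p ⬝ᵥ p = (Qᵀ *ᵥ x) ⬝ᵥ (Qᵀ *ᵥ x) := by rw [hp, ortho_dot hQ]
  calc vnorm x ^ 2 = x ⬝ᵥ x := vnorm_sq x
    _ = ((x - p) + p) ⬝ᵥ ((x - p) + p) := by rw [← hx]
    _ = (x - p) ⬝ᵥ (x - p) + 2 * ((x - p) ⬝ᵥ p) + p ⬝ᵥ p := by
        rw [add_dotProduct, dotProduct_add, dotProduct_add, dotProduct_comm p (x - p)]
        ring
    _ = vnorm (x - p) ^ 2 + vnorm (Qᵀ *ᵥ x) ^ 2 := by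
        rw [hqp, vnorm_sq, vnorm_sq, hpp]; ring

lemma proj_residual_le (x : Fin m → ℝ) : vnorm (x - Q *ᵥ (Qᵀ *ᵥ x)) ≤ vnorm x := by
  refine le_of_sq_le_sq (vnorm_nonneg _) ?_ (vnorm_nonneg _)
  have := proj_pyth hQ x
  nlinarith [sq_nonneg (vnorm (Qᵀ *ᵥ x))]

end Ortho

section Eigen

variable {A : Matrix (Fin m) (Fin n) ℝ} {Q : Matrix (Fin m) (Fin k) ℝ} {D : Fin k → ℝ}
variable (hQ : Qᵀ * Q = 1) (hE : A * Aᵀ * Q = Q * Matrix.diagonal D)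

include hE

/-- eigen relation in mulVec form -/
lemma eigen_vec (a : Fin k → ℝ) :
    A *ᵥ (Aᵀ *ᵥ (Q *ᵥ a)) = Q *ᵥ (fun j => D j * a j) := by
  rw [mulVec_mulVec, mulVec_mulVec, hE, ← mulVec_mulVec, diag_mulVec]

/-- transposed eigen relation -/
lemma eigen_tvec (u : Fin m → ℝ) :
    Qᵀ *ᵥ (A *ᵥ (Aᵀ *ᵥ u)) = fun j => D j * (Qᵀ *ᵥ u) j := by
  have h1 : Qᵀ * (A * Aᵀ) = Matrix.diagonal D * Qᵀ := by
    have h := congrArg Matrix.transpose hE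
    rw [Matrix.transpose_mul (A * Aᵀ) Q, Matrix.transpose_mul Q (Matrix.diagonal D),
      Matrix.transpose_mul A Aᵀ, transpose_transpose, diagonal_transpose] at h
    exact h
  rw [mulVec_mulVec, mulVec_mulVec, Matrix.mul_assoc, h1, ← mulVec_mulVec, diag_mulVec]

/-- `A Aᵀ u` stays orthogonal to the range of `Q` -/
lemma eigen_perp {u : Fin m → ℝ} (hu : Qᵀ *ᵥ u = 0) :
    Qᵀ *ᵥ (A *ᵥ (Aᵀ *ᵥ u)) = 0 := by
  rw [eigen_tvec hE, hu]
  funext j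
  simp

end Eigen

lemma dot_mulVec_right {m k : ℕ} (B : Matrix (Fin m) (Fin k) ℝ) (x : Fin m → ℝ) (y : Fin k → ℝ) :
    x ⬝ᵥ (B *ᵥ y) = (Bᵀ *ᵥ x) ⬝ᵥ y := by
  rw [dotProduct_comm, mulVec_dot, dotProduct_comm]

lemma dot_diag (a b : Fin k → ℝ) (D : Fin k → ℝ) :
    a ⬝ᵥ (fun j => D j * b j) = ∑ j, D j * (a j * b j) := by
  rw [dotProduct]
  exact Finset.sum_congr rfl (fun j _ => by ring)

section Eigen2

variable {A : Matrix (Fin m) (Fin n) ℝ} {Q : Matrix (Fin m) (Fin k) ℝ} {D : Fin k → ℝ}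

lemma key_norm_sq (hQ : Qᵀ * Q = 1) (hE : A * Aᵀ * Q = Q * Matrix.diagonal D)
    {u : Fin m → ℝ} (hu : Qᵀ *ᵥ u = 0) (a : Fin k → ℝ) (t : ℝ) :
    vnorm (Aᵀ *ᵥ (Q *ᵥ a + t • u)) ^ 2
      = (∑ j, D j * a j ^ 2) + t ^ 2 * vnorm (Aᵀ *ᵥ u) ^ 2 := by
  set y := Q *ᵥ a + t • u with hy
  set Mu := A *ᵥ (Aᵀ *ᵥ u) with hMu
  have hAy : A *ᵥ (Aᵀ *ᵥ y) = Q *ᵥ (fun j => D j * a j) + t • Mu := by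
    rw [hy, Matrix.mulVec_add, Matrix.mulVec_smul, Matrix.mulVec_add, Matrix.mulVec_smul,
      eigen_vec hE]
  have h1 : vnorm (Aᵀ *ᵥ y) ^ 2 = y ⬝ᵥ (A *ᵥ (Aᵀ *ᵥ y)) := by
    rw [vnorm_sq, mulVec_dot, transpose_transpose]
  rw [h1, hAy, hy]
  rw [dotProduct_add, add_dotProduct, add_dotProduct]
  have e1 : (Q *ᵥ a) ⬝ᵥ (Q *ᵥ fun j => D j * a j) = ∑ j, D j * a j ^ 2 := by
    rw [ortho_dot hQ, dot_diag]
    exact Finset.sum_congr rfl (fun j _ => by ring)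
  have e2 : (t • u) ⬝ᵥ (Q *ᵥ fun j => D j * a j) = 0 := by
    rw [smul_dotProduct, dot_mulVec_right, hu, zero_dotProduct, smul_zero]
  have e3 : (Q *ᵥ a) ⬝ᵥ (t • Mu) = 0 := by
    rw [dotProduct_smul, hMu, mulVec_dot Q a, eigen_perp hE hu, dotProduct_zero, smul_zero]
  have e4 : (t • u) ⬝ᵥ (t • Mu) = t ^ 2 * vnorm (Aᵀ *ᵥ u) ^ 2 := by
    rw [smul_dotProduct, dotProduct_smul, hMu, dot_mulVec_right, vnorm_sq]
    simp [smul_eq_mul]; ring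
  rw [e1, e2, e3, e4]
  ring

lemma key_norm_sq2 (hQ : Qᵀ * Q = 1) (hE : A * Aᵀ * Q = Q * Matrix.diagonal D)
    {u : Fin m → ℝ} (hu : Qᵀ *ᵥ u = 0) (a : Fin k → ℝ) (t : ℝ) :
    vnorm (A *ᵥ (Aᵀ *ᵥ (Q *ᵥ a + t • u))) ^ 2
      = (∑ j, D j ^ 2 * a j ^ 2) + t ^ 2 * vnorm (A *ᵥ (Aᵀ *ᵥ u)) ^ 2 := by
  set Mu := A *ᵥ (Aᵀ *ᵥ u) with hMu
  have hAy : A *ᵥ (Aᵀ *ᵥ (Q *ᵥ a + t • u)) = Q *ᵥ (fun j => D j * a j) + t • Mu := by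
    rw [Matrix.mulVec_add, Matrix.mulVec_smul, Matrix.mulVec_add, Matrix.mulVec_smul,
      eigen_vec hE]
  rw [hAy, vnorm_sq]
  rw [dotProduct_add, add_dotProduct, add_dotProduct]
  have e1 : (Q *ᵥ fun j => D j * a j) ⬝ᵥ (Q *ᵥ fun j => D j * a j) = ∑ j, D j ^ 2 * a j ^ 2 := by
    rw [ortho_dot hQ, dot_diag]
    exact Finset.sum_congr rfl (fun j _ => by ring)
  have e2 : (t • Mu) ⬝ᵥ (Q *ᵥ fun j => D j * a j) = 0 := by
    rw [smul_dotProduct, dotProduct_comm, hMu, mulVec_dot Q, eigen_perp hE hu,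
      dotProduct_zero, smul_zero]
  have e3 : (Q *ᵥ fun j => D j * a j) ⬝ᵥ (t • Mu) = 0 := by
    rw [dotProduct_comm]
    exact e2
  have e4 : (t • Mu) ⬝ᵥ (t • Mu) = t ^ 2 * vnorm Mu ^ 2 := by
    rw [smul_dotProduct, dotProduct_smul, vnorm_sq]
    simp [smul_eq_mul]; ring
  rw [e1, e2, e3, e4]
  ring

/-- KEY LEMMA: if `u ⟂ range Q` then `‖Aᵀu‖ ≤ e ‖u‖`. -/
lemma perp_bound (hQ : Qᵀ * Q = 1) (hE : A * Aᵀ * Q = Q * Matrix.diagonal D)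
    (hD : ∀ j, 0 < D j) {s e : ℝ} (hs : ∀ j, s ^ 2 ≤ D j) (hse : e < s) (he0 : 0 ≤ e)
    (hsv : sval A (k + 1) ≤ e) {u : Fin m → ℝ} (hu : Qᵀ *ᵥ u = 0) :
    vnorm (Aᵀ *ᵥ u) ≤ e * vnorm u := by
  classical
  by_cases h0 : Aᵀ *ᵥ u = 0
  · rw [h0, vnorm_zero]
    exact mul_nonneg he0 (vnorm_nonneg u)
  · have hu0 : u ≠ 0 := fun h => h0 (by rw [h, Matrix.mulVec_zero])
    have hR : 0 < vnorm (Aᵀ *ᵥ u) := vnorm_pos h0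
    have hvu : 0 < vnorm u := vnorm_pos hu0
    set R := vnorm (Aᵀ *ᵥ u) with hRdef
    set r := R / vnorm u with hrdef
    have hrpos : 0 < r := by positivity
    set c := min s r with hcdef
    have hs0 : 0 < s := lt_of_le_of_lt he0 hse
    have hc0 : 0 ≤ c := le_min hs0.le hrpos.le
    -- the (k+1)-dimensional subspace
    let L : ((Fin k → ℝ) × ℝ) →ₗ[ℝ] (Fin n → ℝ) :=
      { toFun := fun p => Aᵀ *ᵥ (Q *ᵥ p.1 + p.2 • u)
        map_add' := fun p q => by
          show Aᵀ *ᵥ (Q *ᵥ (p.1 + q.1) + (p.2 + q.2) • u)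
              = Aᵀ *ᵥ (Q *ᵥ p.1 + p.2 • u) + Aᵀ *ᵥ (Q *ᵥ q.1 + q.2 • u)
          have h : Q *ᵥ (p.1 + q.1) + (p.2 + q.2) • u
              = (Q *ᵥ p.1 + p.2 • u) + (Q *ᵥ q.1 + q.2 • u) := by
            rw [Matrix.mulVec_add, add_smul]; abel
          rw [h, Matrix.mulVec_add]
        map_smul' := fun t p => by
          show Aᵀ *ᵥ (Q *ᵥ (t • p.1) + (t * p.2) • u) = t • (Aᵀ *ᵥ (Q *ᵥ p.1 + p.2 • u))
          have h : Q *ᵥ (t • p.1) + (t * p.2) • u = t • (Q *ᵥ p.1 + p.2 • u) := by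
            rw [Matrix.mulVec_smul, mul_smul, smul_add]
          rw [h, Matrix.mulVec_smul] }
    have hLval : ∀ p : (Fin k → ℝ) × ℝ, L p = Aᵀ *ᵥ (Q *ᵥ p.1 + p.2 • u) := fun p => rfl
    have hLsq : ∀ p : (Fin k → ℝ) × ℝ,
        vnorm (L p) ^ 2 = (∑ j, D j * p.1 j ^ 2) + p.2 ^ 2 * R ^ 2 := by
      intro p
      rw [hLval, key_norm_sq hQ hE hu]
    have hLinj : Function.Injective L := by
      rw [← LinearMap.ker_eq_bot, LinearMap.ker_eq_bot']
      intro p hp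
      have h1 : vnorm (L p) ^ 2 = 0 := by rw [hp, vnorm_zero]; ring
      rw [hLsq] at h1
      have hterm : ∀ j ∈ Finset.univ, (0:ℝ) ≤ D j * p.1 j ^ 2 :=
        fun j _ => mul_nonneg (hD j).le (sq_nonneg _)
      have hsumnn : (0:ℝ) ≤ ∑ j, D j * p.1 j ^ 2 := Finset.sum_nonneg hterm
      have h2nn : (0:ℝ) ≤ p.2 ^ 2 * R ^ 2 := mul_nonneg (sq_nonneg _) (sq_nonneg _)
      have hsum0 : (∑ j, D j * p.1 j ^ 2) = 0 := by linarith
      have h20 : p.2 ^ 2 * R ^ 2 = 0 := by linarith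
      have hp1 : p.1 = 0 := by
        funext j
        have hj0 := (Finset.sum_eq_zero_iff_of_nonneg hterm).mp hsum0 j (Finset.mem_univ j)
        have : p.1 j ^ 2 = 0 := by
          rcases mul_eq_zero.mp hj0 with h | h
          · exact absurd h (ne_of_gt (hD j))
          · exact h
        exact pow_eq_zero_iff two_ne_zero |>.mp this
      have hp2 : p.2 = 0 := by
        have : p.2 ^ 2 = 0 := by
          rcases mul_eq_zero.mp h20 with h | h
          · exact h
          · exact absurd h (pow_ne_zero 2 hR.ne')
        exact pow_eq_zero_iff two_ne_zero |>.mp this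
      exact Prod.ext hp1 hp2
    have hmem : c ∈ svalSet A (k + 1) := by
      refine ⟨hc0, LinearMap.range L, ?_, ?_⟩
      · rw [LinearMap.finrank_range_of_inj hLinj]
        simp [Module.finrank_prod, Module.finrank_pi, Module.finrank_self]
      · rintro v ⟨p, rfl⟩
        refine le_of_sq_le_sq (vnorm_nonneg _) ?_
          (mul_nonneg hc0 (vnorm_nonneg _))
        have hAv : A *ᵥ (L p) = A *ᵥ (Aᵀ *ᵥ (Q *ᵥ p.1 + p.2 • u)) := rfl
        rw [mul_pow, hLsq, hAv, key_norm_sq2 hQ hE hu]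
        have hMuR : R ^ 2 ≤ vnorm u * vnorm (A *ᵥ (Aᵀ *ᵥ u)) := by
          have heq : R ^ 2 = u ⬝ᵥ (A *ᵥ (Aᵀ *ᵥ u)) := by
            rw [dot_mulVec_right A u (Aᵀ *ᵥ u), hRdef, vnorm_sq]
          rw [heq]
          exact dot_le _ _
        have hterm1 : c ^ 2 * (∑ j, D j * p.1 j ^ 2) ≤ ∑ j, D j ^ 2 * p.1 j ^ 2 := by
          rw [Finset.mul_sum]
          apply Finset.sum_le_sum
          intro j _
          have hcs : c ^ 2 ≤ D j := by nlinarith [min_le_left s r, hc0, hs j]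
          have hmul := mul_le_mul_of_nonneg_right hcs
            (mul_nonneg (hD j).le (sq_nonneg (p.1 j)))
          nlinarith [hmul]
        have hterm2 : c ^ 2 * (p.2 ^ 2 * R ^ 2) ≤ p.2 ^ 2 * vnorm (A *ᵥ (Aᵀ *ᵥ u)) ^ 2 := by
          have hcr : c * vnorm u ≤ R := by
            calc c * vnorm u ≤ r * vnorm u :=
                  mul_le_mul_of_nonneg_right (min_le_right s r) hvu.le
              _ = R := by rw [hrdef]; field_simp
          have hMnn : 0 ≤ vnorm (A *ᵥ (Aᵀ *ᵥ u)) := vnorm_nonneg _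
          have hcrm : c * R ≤ vnorm (A *ᵥ (Aᵀ *ᵥ u)) := by
            nlinarith [mul_le_mul_of_nonneg_right hcr hR.le, hMuR, hvu]
          have hsq2 : (c * R) ^ 2 ≤ vnorm (A *ᵥ (Aᵀ *ᵥ u)) ^ 2 := by
            nlinarith [hcrm, mul_nonneg hc0 hR.le, hMnn]
          calc c ^ 2 * (p.2 ^ 2 * R ^ 2) = p.2 ^ 2 * (c * R) ^ 2 := by ring
            _ ≤ p.2 ^ 2 * vnorm (A *ᵥ (Aᵀ *ᵥ u)) ^ 2 :=
                mul_le_mul_of_nonneg_left hsq2 (sq_nonneg _)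
        nlinarith [hterm1, hterm2]
    have hce : c ≤ e := le_trans (le_sval (Nat.succ_pos k) hmem) hsv
    rcases le_total s r with h | h
    · rw [hcdef] at hce
      rw [min_eq_left h] at hce
      linarith
    · rw [hcdef, min_eq_right h] at hce
      rw [hrdef] at hce
      calc vnorm (Aᵀ *ᵥ u) = R := rfl
        _ ≤ e * vnorm u := by
            rw [div_le_iff₀ hvu] at hce
            linarith

end Eigen2


/-- The right-side orthonormal matrix `V := Aᵀ Q (√D)⁻¹`. -/
noncomputable def Vmat {m n k : ℕ} (A : Matrix (Fin m) (Fin n) ℝ)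
    (Q : Matrix (Fin m) (Fin k) ℝ) (D : Fin k → ℝ) : Matrix (Fin n) (Fin k) ℝ :=
  Aᵀ * Q * Matrix.diagonal (fun j => (Real.sqrt (D j))⁻¹)

section Vlemmas

variable {A : Matrix (Fin m) (Fin n) ℝ} {Q : Matrix (Fin m) (Fin k) ℝ} {D : Fin k → ℝ}

lemma V_orth (hQ : Qᵀ * Q = 1) (hE : A * Aᵀ * Q = Q * Matrix.diagonal D)
    (hD : ∀ j, 0 < D j) : (Vmat A Q D)ᵀ * (Vmat A Q D) = 1 := by
  set S := Matrix.diagonal (fun j => (Real.sqrt (D j))⁻¹) with hS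
  have hSt : Sᵀ = S := Matrix.diagonal_transpose _
  have h1 : (Aᵀ * Q * S)ᵀ = S * (Qᵀ * A) := by
    rw [Matrix.transpose_mul, Matrix.transpose_mul, transpose_transpose, hSt]
  show (Aᵀ * Q * S)ᵀ * (Aᵀ * Q * S) = 1
  rw [h1]
  have h2 : S * (Qᵀ * A) * (Aᵀ * Q * S) = S * (Qᵀ * (A * Aᵀ * Q)) * S := by
    simp only [Matrix.mul_assoc]
  rw [h2, hE, ← Matrix.mul_assoc (Qᵀ) Q (Matrix.diagonal D), hQ, Matrix.one_mul]
  rw [hS, Matrix.diagonal_mul_diagonal, Matrix.diagonal_mul_diagonal]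
  have hfun : (fun i => (Real.sqrt (D i))⁻¹ * D i * (Real.sqrt (D i))⁻¹)
      = fun _ : Fin k => (1:ℝ) := by
    funext j
    have hd := hD j
    have hsp : 0 < Real.sqrt (D j) := Real.sqrt_pos.mpr hd
    have hss : Real.sqrt (D j) * Real.sqrt (D j) = D j := Real.mul_self_sqrt hd.le
    field_simp
    rw [Real.sq_sqrt hd.le]
  rw [hfun, Matrix.diagonal_one]

lemma V_mul (hE : A * Aᵀ * Q = Q * Matrix.diagonal D) (hD : ∀ j, 0 < D j) (b : Fin k → ℝ) :
    A *ᵥ ((Vmat A Q D) *ᵥ b) = Q *ᵥ (fun j => Real.sqrt (D j) * b j) := by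
  show A *ᵥ ((Aᵀ * Q * Matrix.diagonal (fun j => (Real.sqrt (D j))⁻¹)) *ᵥ b) = _
  rw [← Matrix.mulVec_mulVec, ← Matrix.mulVec_mulVec, eigen_vec hE]
  refine congrArg (fun x => Q *ᵥ x) ?_
  funext j
  have hd := hD j
  have hsp : (0:ℝ) < Real.sqrt (D j) := Real.sqrt_pos.mpr hd
  have hss : Real.sqrt (D j) * Real.sqrt (D j) = D j := Real.mul_self_sqrt hd.le
  show D j * ((Matrix.diagonal (fun j => (Real.sqrt (D j))⁻¹) *ᵥ b) j) = Real.sqrt (D j) * b j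
  rw [Matrix.mulVec_diagonal]
  have hkey : D j * (Real.sqrt (D j))⁻¹ = Real.sqrt (D j) := by
    rw [← hss]; field_simp
    rw [Real.sqrt_sq hsp.le]
  calc D j * ((Real.sqrt (D j))⁻¹ * b j) = (D j * (Real.sqrt (D j))⁻¹) * b j := by ring
    _ = Real.sqrt (D j) * b j := by rw [hkey]

lemma V_transfer (hD : ∀ j, 0 < D j) (c : Fin k → ℝ) :
    Aᵀ *ᵥ (Q *ᵥ c) = (Vmat A Q D) *ᵥ (fun j => Real.sqrt (D j) * c j) := by
  show _ = (Aᵀ * Q * Matrix.diagonal (fun j => (Real.sqrt (D j))⁻¹)) *ᵥ _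
  rw [← Matrix.mulVec_mulVec, ← Matrix.mulVec_mulVec]
  have harg : (Matrix.diagonal (fun j => (Real.sqrt (D j))⁻¹)) *ᵥ (fun j => Real.sqrt (D j) * c j)
      = c := by
    funext j
    rw [Matrix.mulVec_diagonal]
    have hsp : (0:ℝ) < Real.sqrt (D j) := Real.sqrt_pos.mpr (hD j)
    field_simp
  rw [harg]

end Vlemmas

lemma vnorm_le_of_sq_le {x y : Fin n → ℝ} (h : ∀ i, x i ^ 2 ≤ y i ^ 2) :
    vnorm x ≤ vnorm y := by
  rw [vnorm, vnorm]
  exact Real.sqrt_le_sqrt (Finset.sum_le_sum (fun i _ => h i))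

lemma scaled_norm {D : Fin k → ℝ} {σ : ℝ} (hσ : 0 < σ) (hs : ∀ j, σ ^ 2 ≤ D j)
    (α : Fin k → ℝ) :
    vnorm (fun j => (Real.sqrt (D j))⁻¹ * α j) ≤ σ⁻¹ * vnorm α := by
  have h1 : vnorm (fun j => (Real.sqrt (D j))⁻¹ * α j) ≤ vnorm (σ⁻¹ • α) := by
    apply vnorm_le_of_sq_le
    intro i
    have hsq : σ ≤ Real.sqrt (D i) := by
      rw [show σ = Real.sqrt (σ ^ 2) from (Real.sqrt_sq hσ.le).symm]
      exact Real.sqrt_le_sqrt (hs i)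
    have hsp : 0 < Real.sqrt (D i) := lt_of_lt_of_le hσ hsq
    have hinv : (Real.sqrt (D i))⁻¹ ≤ σ⁻¹ := by
      rw [inv_le_inv₀ hsp hσ]
      exact hsq
    have hinv0 : 0 ≤ (Real.sqrt (D i))⁻¹ := by positivity
    show ((Real.sqrt (D i))⁻¹ * α i) ^ 2 ≤ (σ⁻¹ * α i) ^ 2
    have hmul := mul_le_mul hinv hinv hinv0 (by positivity : (0:ℝ) ≤ σ⁻¹)
    nlinarith [hmul, sq_nonneg (α i)]
  calc vnorm (fun j => (Real.sqrt (D j))⁻¹ * α j) ≤ vnorm (σ⁻¹ • α) := h1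
    _ = σ⁻¹ * vnorm α := by rw [vnorm_smul, abs_of_nonneg (by positivity : (0:ℝ) ≤ σ⁻¹)]

lemma eq_zero_of_forall_dot {x : Fin k → ℝ} (h : ∀ c, c ⬝ᵥ x = 0) : x = 0 :=
  vnorm_eq_zero (by
    have := h x
    have h2 : vnorm x ^ 2 = 0 := by rw [vnorm_sq]; exact this
    exact pow_eq_zero_iff two_ne_zero |>.mp h2)

lemma exists_unit (hk : 0 < k) : ∃ α : Fin k → ℝ, vnorm α = 1 := by
  refine ⟨fun i => if i = ⟨0, hk⟩ then 1 else 0, ?_⟩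
  rw [vnorm]
  have : ∑ i, (if i = (⟨0, hk⟩ : Fin k) then (1:ℝ) else 0) ^ 2 = 1 := by
    rw [Finset.sum_eq_single (⟨0, hk⟩ : Fin k)]
    · simp
    · intro b _ hb; simp [hb]
    · intro h; exact absurd (Finset.mem_univ _) h
  rw [this, Real.sqrt_one]


lemma vnorm_sub_sq {m : ℕ} (x y : Fin m → ℝ) :
    vnorm (x - y) ^ 2 = vnorm x ^ 2 - 2 * (x ⬝ᵥ y) + vnorm y ^ 2 := by
  rw [vnorm_sq, vnorm_sq, vnorm_sq, sub_dotProduct, dotProduct_sub, dotProduct_sub,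
    dotProduct_comm y x]
  ring

lemma vnorm_neg {m : ℕ} (v : Fin m → ℝ) : vnorm (-v) = vnorm v := by
  rw [vnorm_eq, vnorm_eq, show toE (-v) = -toE v from rfl, norm_neg]

lemma sval_sub_symm {m n : ℕ} (A B : Matrix (Fin m) (Fin n) ℝ) (j : ℕ) :
    sval (A - B) j = sval (B - A) j := by
  have hset : ∀ (A B : Matrix (Fin m) (Fin n) ℝ), svalSet (A - B) j ⊆ svalSet (B - A) j := by
    intro A B c hc
    obtain ⟨h0, W, hW, hp⟩ := hc
    refine ⟨h0, W, hW, fun v hv => ?_⟩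
    have h := hp v hv
    have hre : (A - B) *ᵥ v = -((B - A) *ᵥ v) := by
      rw [Matrix.sub_mulVec, Matrix.sub_mulVec]
      abel
    rwa [hre, vnorm_neg] at h
  show sSup (svalSet (A - B) j) = sSup (svalSet (B - A) j)
  exact congrArg sSup (Set.Subset.antisymm (hset A B) (hset B A))


set_option maxHeartbeats 1000000 in
lemma core {m n k : ℕ} (hk : 0 < k) (X Xh : Matrix (Fin m) (Fin n) ℝ)
    (hrank : X.rank = k) (U Uh : Matrix (Fin m) (Fin k) ℝ)
    (hU1 : Uᵀ * U = 1) {D : Fin k → ℝ} (hUD : X * Xᵀ * U = U * Matrix.diagonal D)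
    (hDge : ∀ j, sval X k ^ 2 ≤ D j)
    (hUh1 : Uhᵀ * Uh = 1) {Dh : Fin k → ℝ} (hUhD : Xh * Xhᵀ * Uh = Uh * Matrix.diagonal Dh)
    (hDhge : ∀ j, sval Xh k ^ 2 ≤ Dh j)
    (hlt : sval (Xh - X) 1 / sval X k < 1 / 2) :
    ∀ α : Fin k → ℝ, vnorm (U *ᵥ α - Uh *ᵥ (Uhᵀ *ᵥ (U *ᵥ α)))
      ≤ (sval (Xh - X) 1 / sval X k) / (1 - sval (Xh - X) 1 / sval X k) * vnorm α := by
  classical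
  set σ := sval X k with hσdef
  set σh := sval Xh k with hσhdef
  set e := sval (Xh - X) 1 with hedef
  have hσ : 0 < σ := sval_rank_pos X hrank hk
  have he0 : 0 ≤ e := sval_nonneg _ _
  have he2 : 2 * e < σ := by
    rw [div_lt_iff₀ hσ] at hlt
    linarith
  have hWeyl : σ ≤ σh + e := by
    have h := sval_weyl X Xh hk
    rw [sval_sub_symm] at h
    exact h
  have hσh : e < σh := by linarith
  have hσh0 : 0 < σh := lt_of_le_of_lt he0 hσh
  have hsvXh1 : sval Xh (k + 1) ≤ e := by
    have h := sval_weyl Xh X (Nat.succ_pos k)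
    rw [sval_eq_zero_of_rank X hrank] at h
    linarith
  have hD_pos : ∀ j, 0 < D j := fun j => lt_of_lt_of_le (pow_pos hσ 2) (hDge j)
  have hDh_pos : ∀ j, 0 < Dh j := fun j => lt_of_lt_of_le (pow_pos hσh0 2) (hDhge j)
  -- left perpendicular bound
  have Lb : ∀ u : Fin m → ℝ, Uhᵀ *ᵥ u = 0 → vnorm (Xhᵀ *ᵥ u) ≤ e * vnorm u :=
    fun u hu => perp_bound hUh1 hUhD hDh_pos hDhge hσh he0 hsvXh1 hu
  -- right perpendicular bound
  have Rb : ∀ z : Fin n → ℝ, (Vmat Xh Uh Dh)ᵀ *ᵥ z = 0 →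
      vnorm (Xh *ᵥ z) ≤ e * vnorm z := by
    intro z hzp
    have hUhu : Uhᵀ *ᵥ (Xh *ᵥ z) = 0 := by
      apply eq_zero_of_forall_dot
      intro c
      rw [dot_mulVec_right Uhᵀ c (Xh *ᵥ z), transpose_transpose,
        dot_mulVec_right Xh (Uh *ᵥ c) z, V_transfer hDh_pos c,
        mulVec_dot (Vmat Xh Uh Dh), hzp, dotProduct_zero]
    have h2 : vnorm (Xh *ᵥ z) ^ 2 ≤ vnorm z * (e * vnorm (Xh *ᵥ z)) := by
      calc vnorm (Xh *ᵥ z) ^ 2 = (Xh *ᵥ z) ⬝ᵥ (Xh *ᵥ z) := vnorm_sq _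
        _ = z ⬝ᵥ (Xhᵀ *ᵥ (Xh *ᵥ z)) := by rw [mulVec_dot Xh z (Xh *ᵥ z)]
        _ ≤ vnorm z * vnorm (Xhᵀ *ᵥ (Xh *ᵥ z)) := dot_le _ _
        _ ≤ vnorm z * (e * vnorm (Xh *ᵥ z)) :=
            mul_le_mul_of_nonneg_left (Lb _ hUhu) (vnorm_nonneg z)
    by_cases h0 : vnorm (Xh *ᵥ z) = 0
    · rw [h0]
      exact mul_nonneg he0 (vnorm_nonneg z)
    · have hup : 0 < vnorm (Xh *ᵥ z) :=
        lt_of_le_of_ne (vnorm_nonneg _) (Ne.symm h0)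
      nlinarith [vnorm_nonneg z]
  set Vm := Vmat X U D with hVmdef
  set Vhm := Vmat Xh Uh Dh with hVhmdef
  have hV1 : Vmᵀ * Vm = 1 := V_orth hU1 hUD hD_pos
  have hVh1 : Vhmᵀ * Vhm = 1 := V_orth hUh1 hUhD hDh_pos
  -- the two families
  set F : (Fin k → ℝ) → (Fin m → ℝ) :=
    fun α => U *ᵥ α - Uh *ᵥ (Uhᵀ *ᵥ (U *ᵥ α)) with hFdef
  set G : (Fin k → ℝ) → (Fin n → ℝ) :=
    fun β => Vm *ᵥ β - Vhm *ᵥ (Vhmᵀ *ᵥ (Vm *ᵥ β)) with hGdef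
  set SA : Set ℝ := {x | ∃ α : Fin k → ℝ, vnorm α = 1 ∧ x = vnorm (F α)} with hSAdef
  set SB : Set ℝ := {x | ∃ β : Fin k → ℝ, vnorm β = 1 ∧ x = vnorm (G β)} with hSBdef
  obtain ⟨α₀, hα₀⟩ := exists_unit hk
  have hSAne : SA.Nonempty := ⟨vnorm (F α₀), α₀, hα₀, rfl⟩
  have hSBne : SB.Nonempty := ⟨vnorm (G α₀), α₀, hα₀, rfl⟩
  have hSAbdd : BddAbove SA := by
    refine ⟨1, ?_⟩
    rintro x ⟨α, hα, rfl⟩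
    calc vnorm (F α) ≤ vnorm (U *ᵥ α) := proj_residual_le hUh1 _
      _ = vnorm α := ortho_vnorm hU1 α
      _ = 1 := hα
  have hSBbdd : BddAbove SB := by
    refine ⟨1, ?_⟩
    rintro x ⟨β, hβ, rfl⟩
    calc vnorm (G β) ≤ vnorm (Vm *ᵥ β) := proj_residual_le hVh1 _
      _ = vnorm β := ortho_vnorm hV1 β
      _ = 1 := hβ
  set a := sSup SA with hadef
  set b := sSup SB with hbdef
  have ha0 : 0 ≤ a := Real.sSup_nonneg (by rintro x ⟨α, hα, rfl⟩; exact vnorm_nonneg _)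
  have hb0 : 0 ≤ b := Real.sSup_nonneg (by rintro x ⟨β, hβ, rfl⟩; exact vnorm_nonneg _)
  -- linearity and scaled bounds
  have hFsmul : ∀ (t : ℝ) (α : Fin k → ℝ), F (t • α) = t • F α := by
    intro t α
    show U *ᵥ (t • α) - Uh *ᵥ (Uhᵀ *ᵥ (U *ᵥ (t • α))) = t • (U *ᵥ α - Uh *ᵥ (Uhᵀ *ᵥ (U *ᵥ α)))
    rw [Matrix.mulVec_smul, Matrix.mulVec_smul, Matrix.mulVec_smul, smul_sub]
  have hGsmul : ∀ (t : ℝ) (β : Fin k → ℝ), G (t • β) = t • G β := by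
    intro t β
    show Vm *ᵥ (t • β) - Vhm *ᵥ (Vhmᵀ *ᵥ (Vm *ᵥ (t • β)))
        = t • (Vm *ᵥ β - Vhm *ᵥ (Vhmᵀ *ᵥ (Vm *ᵥ β)))
    rw [Matrix.mulVec_smul, Matrix.mulVec_smul, Matrix.mulVec_smul, smul_sub]
  have hF0 : F 0 = 0 := by
    show U *ᵥ (0 : Fin k → ℝ) - Uh *ᵥ (Uhᵀ *ᵥ (U *ᵥ (0 : Fin k → ℝ))) = 0
    rw [Matrix.mulVec_zero, Matrix.mulVec_zero, Matrix.mulVec_zero, sub_zero]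
  have hG0 : G 0 = 0 := by
    show Vm *ᵥ (0 : Fin k → ℝ) - Vhm *ᵥ (Vhmᵀ *ᵥ (Vm *ᵥ (0 : Fin k → ℝ))) = 0
    rw [Matrix.mulVec_zero, Matrix.mulVec_zero, Matrix.mulVec_zero, sub_zero]
  have hFle : ∀ α : Fin k → ℝ, vnorm (F α) ≤ a * vnorm α := by
    intro α
    by_cases h0 : α = 0
    · subst h0
      rw [hF0, vnorm_zero, vnorm_zero, mul_zero]
    · have ht : 0 < vnorm α := vnorm_pos h0
      have hα₁ : vnorm ((vnorm α)⁻¹ • α) = 1 := by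
        rw [vnorm_smul, abs_of_nonneg (by positivity), inv_mul_cancel₀ ht.ne']
      have hmem : vnorm (F ((vnorm α)⁻¹ • α)) ∈ SA := ⟨_, hα₁, rfl⟩
      have hle := le_csSup hSAbdd hmem
      have hFα : F α = vnorm α • F ((vnorm α)⁻¹ • α) := by
        rw [hFsmul, smul_smul, mul_inv_cancel₀ ht.ne', one_smul]
      rw [hFα, vnorm_smul, abs_of_nonneg ht.le, mul_comm a (vnorm α)]
      exact mul_le_mul_of_nonneg_left hle ht.le
  have hGle : ∀ β : Fin k → ℝ, vnorm (G β) ≤ b * vnorm β := by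
    intro β
    by_cases h0 : β = 0
    · subst h0
      rw [hG0, vnorm_zero, vnorm_zero, mul_zero]
    · have ht : 0 < vnorm β := vnorm_pos h0
      have hβ₁ : vnorm ((vnorm β)⁻¹ • β) = 1 := by
        rw [vnorm_smul, abs_of_nonneg (by positivity), inv_mul_cancel₀ ht.ne']
      have hmem : vnorm (G ((vnorm β)⁻¹ • β)) ∈ SB := ⟨_, hβ₁, rfl⟩
      have hle := le_csSup hSBbdd hmem
      have hGβ : G β = vnorm β • G ((vnorm β)⁻¹ • β) := by
        rw [hGsmul, smul_smul, mul_inv_cancel₀ ht.ne', one_smul]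
      rw [hGβ, vnorm_smul, abs_of_nonneg ht.le, mul_comm b (vnorm β)]
      exact mul_le_mul_of_nonneg_left hle ht.le
  -- Inequality (A): a ≤ e/σ * (1 + b)
  have hA : a ≤ e / σ * (1 + b) := by
    apply csSup_le hSAne
    rintro x ⟨α, hα, rfl⟩
    set β' := fun j => (Real.sqrt (D j))⁻¹ * α j with hβ'def
    set w := Vm *ᵥ β' with hwdef
    have hXw : X *ᵥ w = U *ᵥ α := by
      rw [hwdef, hVmdef, V_mul hUD hD_pos β']
      refine congrArg (fun x => U *ᵥ x) ?_
      funext j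
      have hsp : (0:ℝ) < Real.sqrt (D j) := Real.sqrt_pos.mpr (hD_pos j)
      show Real.sqrt (D j) * ((Real.sqrt (D j))⁻¹ * α j) = α j
      field_simp
    have hβ' : vnorm β' ≤ σ⁻¹ := by
      have h := scaled_norm hσ hDge α
      rw [hα, mul_one] at h
      exact h
    have hw : vnorm w = vnorm β' := ortho_vnorm hV1 β'
    set z := w - Vhm *ᵥ (Vhmᵀ *ᵥ w) with hzdef
    have hzperp : Vhmᵀ *ᵥ z = 0 := proj_perp hVh1 w
    have hzb : vnorm z ≤ b * vnorm β' := hGle β'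
    -- decomposition
    set y := Xh *ᵥ (Vhm *ᵥ (Vhmᵀ *ᵥ w)) with hydef
    have hy : y = Uh *ᵥ (fun j => Real.sqrt (Dh j) * (Vhmᵀ *ᵥ w) j) := by
      rw [hydef, hVhmdef]
      exact V_mul hUhD hDh_pos _
    have hPy : Uh *ᵥ (Uhᵀ *ᵥ y) = y := by rw [hy, ortho_tQ hUh1]
    have hwzy : X *ᵥ w = Xh *ᵥ z + y - (Xh - X) *ᵥ w := by
      rw [Matrix.sub_mulVec]
      have hXhz : Xh *ᵥ z = Xh *ᵥ w - y := by
        rw [hzdef, Matrix.mulVec_sub, hydef]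
      rw [hXhz]
      abel
    have hdecomp : F α = (Xh *ᵥ z - Uh *ᵥ (Uhᵀ *ᵥ (Xh *ᵥ z)))
        - ((Xh - X) *ᵥ w - Uh *ᵥ (Uhᵀ *ᵥ ((Xh - X) *ᵥ w))) := by
      show U *ᵥ α - Uh *ᵥ (Uhᵀ *ᵥ (U *ᵥ α)) = _
      rw [← hXw, hwzy]
      simp only [Matrix.mulVec_add, Matrix.mulVec_sub]
      rw [hPy]
      abel
    have hterm2 : vnorm ((Xh - X) *ᵥ w - Uh *ᵥ (Uhᵀ *ᵥ ((Xh - X) *ᵥ w))) ≤ e * vnorm β' := by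
      calc vnorm ((Xh - X) *ᵥ w - Uh *ᵥ (Uhᵀ *ᵥ ((Xh - X) *ᵥ w)))
          ≤ vnorm ((Xh - X) *ᵥ w) := proj_residual_le hUh1 _
        _ ≤ e * vnorm w := sval_one_mulVec_le (Xh - X) w
        _ = e * vnorm β' := by rw [hw]
    have hterm1 : vnorm (Xh *ᵥ z - Uh *ᵥ (Uhᵀ *ᵥ (Xh *ᵥ z))) ≤ e * (b * vnorm β') := by
      calc vnorm (Xh *ᵥ z - Uh *ᵥ (Uhᵀ *ᵥ (Xh *ᵥ z)))
          ≤ vnorm (Xh *ᵥ z) := proj_residual_le hUh1 _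
        _ ≤ e * vnorm z := Rb z hzperp
        _ ≤ e * (b * vnorm β') := mul_le_mul_of_nonneg_left hzb he0
    have hsum : vnorm (F α) ≤ e * (b * vnorm β') + e * vnorm β' := by
      rw [hdecomp]
      exact (vnorm_sub_le _ _).trans (add_le_add hterm1 hterm2)
    have hβ'0 : 0 ≤ vnorm β' := vnorm_nonneg _
    have h1 : e * (b * vnorm β') ≤ e * (b * σ⁻¹) :=
      mul_le_mul_of_nonneg_left (mul_le_mul_of_nonneg_left hβ' hb0) he0
    have h2 : e * vnorm β' ≤ e * σ⁻¹ := mul_le_mul_of_nonneg_left hβ' he0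
    have hgoal : e * (b * σ⁻¹) + e * σ⁻¹ = e / σ * (1 + b) := by
      field_simp
      ring
    linarith
  -- Inequality (B): b ≤ e/σ * (1 + a)
  have hB : b ≤ e / σ * (1 + a) := by
    apply csSup_le hSBne
    rintro x ⟨β, hβu, rfl⟩
    set γ := fun j => (Real.sqrt (D j))⁻¹ * β j with hγdef
    set ρ := U *ᵥ γ with hρdef
    have hω : Xᵀ *ᵥ ρ = Vm *ᵥ β := by
      rw [hρdef, hVmdef, V_transfer hD_pos γ]
      refine congrArg (fun x => Vmat X U D *ᵥ x) ?_
      funext j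
      have hsp : (0:ℝ) < Real.sqrt (D j) := Real.sqrt_pos.mpr (hD_pos j)
      show Real.sqrt (D j) * ((Real.sqrt (D j))⁻¹ * β j) = β j
      field_simp
    have hγ : vnorm γ ≤ σ⁻¹ := by
      have h := scaled_norm hσ hDge β
      rw [hβu, mul_one] at h
      exact h
    have hρn : vnorm ρ = vnorm γ := ortho_vnorm hU1 γ
    set ρp := ρ - Uh *ᵥ (Uhᵀ *ᵥ ρ) with hρpdef
    have hρperp : Uhᵀ *ᵥ ρp = 0 := proj_perp hUh1 ρ
    have hρpa : vnorm ρp ≤ a * vnorm γ := hFle γ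
    -- decomposition
    set y' := Xhᵀ *ᵥ (Uh *ᵥ (Uhᵀ *ᵥ ρ)) with hy'def
    have hy' : y' = Vhm *ᵥ (fun j => Real.sqrt (Dh j) * (Uhᵀ *ᵥ ρ) j) := by
      rw [hy'def, hVhmdef]
      exact V_transfer hDh_pos _
    have hPy' : Vhm *ᵥ (Vhmᵀ *ᵥ y') = y' := by rw [hy', ortho_tQ hVh1]
    have hwzy' : Xᵀ *ᵥ ρ = Xhᵀ *ᵥ ρp + y' - (Xh - X)ᵀ *ᵥ ρ := by
      rw [Matrix.transpose_sub, Matrix.sub_mulVec]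
      have hXhρ : Xhᵀ *ᵥ ρp = Xhᵀ *ᵥ ρ - y' := by
        rw [hρpdef, Matrix.mulVec_sub, hy'def]
      rw [hXhρ]
      abel
    have hdecomp : G β = (Xhᵀ *ᵥ ρp - Vhm *ᵥ (Vhmᵀ *ᵥ (Xhᵀ *ᵥ ρp)))
        - ((Xh - X)ᵀ *ᵥ ρ - Vhm *ᵥ (Vhmᵀ *ᵥ ((Xh - X)ᵀ *ᵥ ρ))) := by
      show Vm *ᵥ β - Vhm *ᵥ (Vhmᵀ *ᵥ (Vm *ᵥ β)) = _
      rw [← hω, hwzy']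
      simp only [Matrix.mulVec_add, Matrix.mulVec_sub]
      rw [hPy']
      abel
    have hterm2 : vnorm ((Xh - X)ᵀ *ᵥ ρ - Vhm *ᵥ (Vhmᵀ *ᵥ ((Xh - X)ᵀ *ᵥ ρ))) ≤ e * vnorm γ := by
      calc vnorm ((Xh - X)ᵀ *ᵥ ρ - Vhm *ᵥ (Vhmᵀ *ᵥ ((Xh - X)ᵀ *ᵥ ρ)))
          ≤ vnorm ((Xh - X)ᵀ *ᵥ ρ) := proj_residual_le hVh1 _
        _ ≤ e * vnorm ρ := sval_one_transpose_le (Xh - X) ρ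
        _ = e * vnorm γ := by rw [hρn]
    have hterm1 : vnorm (Xhᵀ *ᵥ ρp - Vhm *ᵥ (Vhmᵀ *ᵥ (Xhᵀ *ᵥ ρp))) ≤ e * (a * vnorm γ) := by
      calc vnorm (Xhᵀ *ᵥ ρp - Vhm *ᵥ (Vhmᵀ *ᵥ (Xhᵀ *ᵥ ρp)))
          ≤ vnorm (Xhᵀ *ᵥ ρp) := proj_residual_le hVh1 _
        _ ≤ e * vnorm ρp := Lb ρp hρperp
        _ ≤ e * (a * vnorm γ) := mul_le_mul_of_nonneg_left hρpa he0
    have hsum : vnorm (G β) ≤ e * (a * vnorm γ) + e * vnorm γ := by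
      rw [hdecomp]
      exact (vnorm_sub_le _ _).trans (add_le_add hterm1 hterm2)
    have h1 : e * (a * vnorm γ) ≤ e * (a * σ⁻¹) :=
      mul_le_mul_of_nonneg_left (mul_le_mul_of_nonneg_left hγ ha0) he0
    have h2 : e * vnorm γ ≤ e * σ⁻¹ := mul_le_mul_of_nonneg_left hγ he0
    have hgoal : e * (a * σ⁻¹) + e * σ⁻¹ = e / σ * (1 + a) := by
      field_simp
      ring
    linarith
  -- solve the system
  have hε0nn : 0 ≤ e / σ := div_nonneg he0 hσ.le
  have hε0lt : e / σ < 1 / 2 := hlt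
  have ha_fin : a ≤ (e / σ) / (1 - e / σ) := by
    rw [le_div_iff₀ (by linarith : (0:ℝ) < 1 - e / σ)]
    nlinarith [mul_le_mul_of_nonneg_left hB hε0nn, hA, ha0, hb0]
  intro α
  calc vnorm (F α) ≤ a * vnorm α := hFle α
    _ ≤ (e / σ) / (1 - e / σ) * vnorm α :=
        mul_le_mul_of_nonneg_right ha_fin (vnorm_nonneg α)


end Stmt9Aux

/-- (Lemma "matrix-perturb" (6).) Under the top-`k` singular subspace
perturbation setting with `ε₀ := ‖X̂−X‖₂/σ_k(X) < 1/2` and `ε₁ := ε₀/(1−ε₀)`: for any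
`α̂ ∈ ℝ^k` and any `v ∈ range(U)`,
`‖Û α̂ − v‖₂² ≤ ‖α̂ − Ûᵀ v‖₂² + ‖v‖₂² ε₁²`. -/
theorem stmt_9 {m n k : ℕ} (hk : 0 < k) (X Xh : Matrix (Fin m) (Fin n) ℝ)
    (hrank : X.rank = k)
    (U Uh : Matrix (Fin m) (Fin k) ℝ)
    (hU : IsTopSingular X U) (hUh : IsTopSingular Xh Uh)
    (ε0 ε1 : ℝ)
    (hε0 : ε0 = sval (Xh - X) 1 / sval X k)
    (hε0lt : ε0 < 1 / 2)
    (hε1 : ε1 = ε0 / (1 - ε0)) :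
    ∀ (αh : Fin k → ℝ) (v : Fin m → ℝ), (∃ α : Fin k → ℝ, v = U.mulVec α) →
      vnorm (Uh.mulVec αh - v) ^ 2
        ≤ vnorm (αh - Uh.transpose.mulVec v) ^ 2 + vnorm v ^ 2 * ε1 ^ 2 := by
  open Matrix Stmt9Aux in
  obtain ⟨hU1, D, hUD, hDge⟩ := hU
  obtain ⟨hUh1, Dh, hUhD, hDhge⟩ := hUh
  subst hε1
  subst hε0
  intro αh v hv
  obtain ⟨α, rfl⟩ := hv
  have hcore := core hk X Xh hrank U Uh hU1 hUD hDge hUh1 hUhD hDhge hε0lt α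
  have hperp : Uhᵀ *ᵥ (U *ᵥ α - Uh *ᵥ (Uhᵀ *ᵥ (U *ᵥ α))) = 0 := proj_perp hUh1 (U *ᵥ α)
  have hsplit : Uh *ᵥ αh - U *ᵥ α
      = Uh *ᵥ (αh - Uhᵀ *ᵥ (U *ᵥ α)) - (U *ᵥ α - Uh *ᵥ (Uhᵀ *ᵥ (U *ᵥ α))) := by
    rw [Matrix.mulVec_sub]
    abel
  have hcross : (Uh *ᵥ (αh - Uhᵀ *ᵥ (U *ᵥ α))) ⬝ᵥ (U *ᵥ α - Uh *ᵥ (Uhᵀ *ᵥ (U *ᵥ α))) = 0 := by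
    rw [mulVec_dot Uh, hperp, dotProduct_zero]
  have hA1 : vnorm (Uh *ᵥ (αh - Uhᵀ *ᵥ (U *ᵥ α))) ^ 2
      = vnorm (αh - Uhᵀ *ᵥ (U *ᵥ α)) ^ 2 := by
    rw [ortho_vnorm hUh1]
  have hsq : vnorm (Uh *ᵥ αh - U *ᵥ α) ^ 2
      = vnorm (αh - Uhᵀ *ᵥ (U *ᵥ α)) ^ 2
        + vnorm (U *ᵥ α - Uh *ᵥ (Uhᵀ *ᵥ (U *ᵥ α))) ^ 2 := by
    rw [hsplit, vnorm_sub_sq, hcross, hA1]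
    ring
  set e := sval (Xh - X) 1 with hedef
  set σ := sval X k with hσdef
  have hσp : 0 < σ := sval_rank_pos X hrank hk
  have he0 : 0 ≤ e := sval_nonneg _ _
  have hε0nn : 0 ≤ e / σ := div_nonneg he0 hσp.le
  have hε1nn : 0 ≤ (e / σ) / (1 - e / σ) := div_nonneg hε0nn (by linarith : (0:ℝ) ≤ 1 - e / σ)
  have hvnorm : vnorm (U *ᵥ α) = vnorm α := ortho_vnorm hU1 α
  have hqb : vnorm (U *ᵥ α - Uh *ᵥ (Uhᵀ *ᵥ (U *ᵥ α)))
      ≤ (e / σ) / (1 - e / σ) * vnorm (U *ᵥ α) := by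
    rw [hvnorm]
    exact hcore
  have hq2 := pow_le_pow_left₀ (vnorm_nonneg _) hqb 2
  rw [hsq]
  nlinarith [hq2, sq_nonneg (vnorm (U *ᵥ α)), vnorm_nonneg (U *ᵥ α)]
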